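/- Let π ∈ S_NC⁻(2p,2q) be such that γ_{2p,2q}π⁻¹ separates the points of O = {1,3,…,2p+2q−1}, and define π̌ on {1,…,p+q} by 2π̌(k) = π²(2k). Then for all k,l ∈ {1,…,p+q}: γ_{p,q}π̌⁻¹(k) = l if and only if γ_{2p,2q}π⁻¹(2k) = 2l. -/

import Mathlib

open Equiv Finset
open scoped Classical

noncomputable section

def numCycles {n : ℕ} (π : Equiv.Perm (Fin n)) : ℕ :=
  π.cycleType.card + (univ.filter fun x => π x = x).card

def plen {n : ℕ} (π : Equiv.Perm (Fin n)) : ℕ := n - numCycles π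

def gammaPQ (p q : ℕ) : Equiv.Perm (Fin (p + q)) :=
  finSumFinEquiv.permCongr (Equiv.sumCongr (finRotate p) (finRotate q))

def cycleLen {n : ℕ} (π : Equiv.Perm (Fin n)) (k : Fin n) : ℕ :=
  (univ.filter fun m => π.SameCycle k m).card

def Separates {n : ℕ} (σ : Equiv.Perm (Fin n)) (A : Finset (Fin n)) : Prop :=
  ∀ a ∈ A, ∀ b ∈ A, σ.SameCycle a b → a = b

def oddSet (n : ℕ) : Finset (Fin n) := univ.filter fun i => Odd (i.val + 1)

def IsSNC (p q : ℕ) (π : Equiv.Perm (Fin (p + q))) : Prop :=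
  (∃ i j, π.SameCycle i j ∧ ¬ (gammaPQ p q).SameCycle i j) ∧
    numCycles π + numCycles (gammaPQ p q * π⁻¹) = p + q

def SameParity {n : ℕ} (a b : Fin n) : Prop := (Odd (a.val + 1) ↔ Odd (b.val + 1))

def EvenCycles {n : ℕ} (π : Equiv.Perm (Fin n)) : Prop := ∀ k, Even (cycleLen π k)

def ParityReversing {n : ℕ} (π : Equiv.Perm (Fin n)) : Prop := ∀ k, ¬ SameParity k (π k)

def SNCminus (p q : ℕ) (π : Equiv.Perm (Fin (p + q))) : Prop :=
  IsSNC p q π ∧ EvenCycles π ∧ ParityReversing π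

end

/-- The point of the doubled annulus with label twice the label of k,
i.e. the element "2k" of {1,…,2p+2q} when k ∈ {1,…,p+q}. -/

lemma finRotate_val (a : ℕ) (i : Fin a) :
    ((finRotate a) i).val = if i.val + 1 = a then 0 else i.val + 1 := by
  rcases a with _ | n
  · exact absurd i.isLt (by omega)
  · rw [coe_finRotate]
    by_cases h : i = Fin.last n
    · subst h; simp
    · rw [if_neg h, if_neg (by have := Fin.val_lt_last h; omega)]

lemma gamma_val (a b : ℕ) (i : Fin (a+b)) :
    ((gammaPQ a b) i).val =
      if i.val + 1 = a then 0 else if i.val + 1 = a + b then a else i.val + 1 := by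
  rcases i with ⟨i, hi⟩
  by_cases h : i < a
  · have e : (⟨i, hi⟩ : Fin (a+b)) = Fin.castAdd b ⟨i, h⟩ := rfl
    rw [e]
    simp only [gammaPQ, Equiv.permCongr_apply, Equiv.symm_symm,
      finSumFinEquiv_symm_apply_castAdd, Equiv.sumCongr_apply, Sum.map_inl,
      finSumFinEquiv_apply_left, Fin.coe_castAdd]
    rw [finRotate_val]
    simp only [Fin.coe_castAdd, Fin.val_mk]
    split_ifs <;> omega
  · have e : (⟨i, hi⟩ : Fin (a+b)) = Fin.natAdd a ⟨i - a, by omega⟩ := by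
      simp [Fin.ext_iff]; omega
    rw [e]
    simp only [gammaPQ, Equiv.permCongr_apply, Equiv.symm_symm,
      finSumFinEquiv_symm_apply_natAdd, Equiv.sumCongr_apply, Sum.map_inr,
      finSumFinEquiv_apply_right, Fin.coe_natAdd]
    rw [finRotate_val]
    simp only [Fin.coe_natAdd, Fin.val_mk]
    split_ifs <;> omega

lemma gamma2_flip {p q : ℕ} (i : Fin (2*p + 2*q)) :
    ((gammaPQ (2*p) (2*q)) i).val % 2 ≠ i.val % 2 := by
  have h := gamma_val (2*p) (2*q) i
  have hi := i.isLt
  rw [h]; split_ifs <;> omega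

noncomputable def dbl {p q : ℕ} (k : Fin (p + q)) : Fin (2*p + 2*q) :=
  ⟨2 * k.val + 1, by have := k.isLt; omega⟩

theorem stmt8 {p q : ℕ} (π : Equiv.Perm (Fin (2*p + 2*q)))
    (hπ : SNCminus (2*p) (2*q) π)
    (hsep : Separates (gammaPQ (2*p) (2*q) * π⁻¹) (oddSet (2*p + 2*q)))
    (σ : Equiv.Perm (Fin (p + q)))
    (hσ : ∀ k : Fin (p + q), (π ^ 2) (dbl k) = dbl (σ k)) :
    ∀ k l : Fin (p + q),
      (gammaPQ p q * σ⁻¹) k = l ↔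
        (gammaPQ (2*p) (2*q) * π⁻¹) (dbl k) = dbl l := by
  -- abbreviations
  have hpr : ParityReversing π := hπ.2.2
  -- π reverses val-parity
  have hpr' : ∀ x : Fin (2*p + 2*q), (π x).val % 2 ≠ x.val % 2 := by
    intro x hx
    refine hpr x ?_
    unfold SameParity
    rw [Nat.odd_iff, Nat.odd_iff]
    omega
  -- γ₂π⁻¹ fixes every even-val point
  have hfix : ∀ x : Fin (2*p + 2*q), x.val % 2 = 0 →
      (gammaPQ (2*p) (2*q) * π⁻¹) x = x := by
    intro x hx
    have hxO : x ∈ oddSet (2*p + 2*q) := by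
      simp only [oddSet, mem_filter, mem_univ, true_and, Nat.odd_iff]
      omega
    set y := (gammaPQ (2*p) (2*q) * π⁻¹) x with hy
    have hz : (π (π⁻¹ x)).val % 2 ≠ (π⁻¹ x).val % 2 := hpr' _
    rw [show π (π⁻¹ x) = x from π.apply_symm_apply x] at hz
    have hyval : y.val % 2 = 0 := by
      have := gamma2_flip (p := p) (q := q) (π⁻¹ x)
      have : ((gammaPQ (2*p) (2*q)) (π⁻¹ x)).val % 2 ≠ (π⁻¹ x).val % 2 := this
      rw [hy, Equiv.Perm.mul_apply]
      omega
    have hyO : y ∈ oddSet (2*p + 2*q) := by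
      simp only [oddSet, mem_filter, mem_univ, true_and, Nat.odd_iff]
      omega
    have hsc : (gammaPQ (2*p) (2*q) * π⁻¹).SameCycle x y := ⟨1, by simp [hy]⟩
    exact (hsep x hxO y hyO hsc).symm
  -- π agrees with γ₂ on the points dbl m
  have hhalf : ∀ m : Fin (p + q), π (dbl m) = gammaPQ (2*p) (2*q) (dbl m) := by
    intro m
    have hdval : (dbl m : Fin (2*p + 2*q)).val % 2 = 1 := by
      simp [dbl, Nat.add_mod]
    have hx : ((gammaPQ (2*p) (2*q)) (dbl m)).val % 2 = 0 := by
      have := gamma2_flip (p := p) (q := q) (dbl m)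
      omega
    have h1 := hfix _ hx
    rw [Equiv.Perm.mul_apply] at h1
    have h2 : π⁻¹ ((gammaPQ (2*p) (2*q)) (dbl m)) = dbl m :=
      (gammaPQ (2*p) (2*q)).injective h1
    have h3 := congrArg π h2
    rw [show π (π⁻¹ ((gammaPQ (2*p) (2*q)) (dbl m))) = (gammaPQ (2*p) (2*q)) (dbl m) from π.apply_symm_apply _] at h3
    exact h3.symm
  -- γ₂² on dbl m equals dbl of γ_{p,q} m
  have hsq : ∀ m : Fin (p + q),
      gammaPQ (2*p) (2*q) (gammaPQ (2*p) (2*q) (dbl m)) = dbl ((gammaPQ p q) m) := by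
    intro m
    have hm := m.isLt
    apply Fin.ext
    rw [gamma_val, gamma_val]
    have hrhs : (dbl ((gammaPQ p q) m) : Fin (2*p + 2*q)).val
        = 2 * ((gammaPQ p q) m).val + 1 := rfl
    have hlhs : (dbl m : Fin (2*p + 2*q)).val = 2 * m.val + 1 := rfl
    rw [hrhs, hlhs, gamma_val]
    split_ifs <;> omega
  -- key computation
  have hkey : ∀ m : Fin (p + q),
      (gammaPQ (2*p) (2*q) * π⁻¹) (dbl (σ m)) = dbl ((gammaPQ p q) m) := by
    intro m
    have h1 : π (π (dbl m)) = dbl (σ m) := by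
      have := hσ m
      rwa [sq, Equiv.Perm.mul_apply] at this
    rw [hhalf m] at h1
    have h2 : π⁻¹ (dbl (σ m)) = gammaPQ (2*p) (2*q) (dbl m) := by
      rw [Equiv.Perm.inv_def, Equiv.symm_apply_eq]
      exact h1.symm
    rw [Equiv.Perm.mul_apply, h2, hsq]
  -- injectivity of dbl
  have hdinj : ∀ a b : Fin (p + q), (dbl a : Fin (2*p + 2*q)) = dbl b → a = b := by
    intro a b hab
    have := congrArg Fin.val hab
    simp only [dbl] at this
    exact Fin.ext (by omega)
  intro k l
  have hk : dbl k = dbl (σ (σ⁻¹ k)) := by rw [show σ (σ⁻¹ k) = k from σ.apply_symm_apply k]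
  have hkey' : (gammaPQ (2*p) (2*q)) (π⁻¹ (dbl (σ (σ⁻¹ k)))) = dbl ((gammaPQ p q) (σ⁻¹ k)) := by
    have := hkey (σ⁻¹ k)
    rwa [Equiv.Perm.mul_apply] at this
  rw [Equiv.Perm.mul_apply, Equiv.Perm.mul_apply, hk, hkey']
  constructor
  · intro h
    exact congrArg dbl h
  · intro h
    exact hdinj _ _ h
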